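/- (Random hold-out(q) weights.) Let 1 ≤ q ≤ n, let I be a uniform random subset of {1,…,n} of cardinality q, and set W_i := (n/q)·1_{i∈I}. Let Λ ⊆ {1,…,n} with card(Λ) = m ≥ 1 satisfy q + m > n (so that I ∩ Λ ≠ ∅ almost surely). Then for any i ∈ Λ and W̄ := m^{−1} Σ_{j∈Λ} W_j, one has E[(W_i − W̄)²/W̄ | W̄ > 0] = n/q − 1. -/

import Mathlib

open MeasureTheory ProbabilityTheory Finset

instance {α : Type*} : MeasurableSpace (Finset α) := ⊤

/-- uniform probability measure on a finite type. -/
noncomputable def unifM (α : Type*) [Fintype α] [MeasurableSpace α] : Measure α :=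
  (Fintype.card α : ENNReal)⁻¹ • Measure.count

/-- Random hold-out(q) weights: `W_i = (n/q) 1_{i ∈ I}` for `I` a uniform random subset of
`{1, …, n}` of cardinality `q`. -/
noncomputable def rhoW (n q : ℕ) (i : Fin n) (I : {t : Finset (Fin n) // t.card = q}) : ℝ :=
  if i ∈ I.1 then (n : ℝ) / q else 0

namespace RhoAux

variable {n q : ℕ}

instance instMSC : MeasurableSingletonClass {t : Finset (Fin n) // t.card = q} :=
  ⟨fun a => ⟨Subtype.val '' {a}, trivial, by
    rw [Set.preimage_image_eq _ Subtype.val_injective]⟩⟩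

lemma nonempty_NQ (hqn : q ≤ n) : Nonempty {t : Finset (Fin n) // t.card = q} := by
  obtain ⟨t, -, ht⟩ := Finset.exists_subset_card_eq (s := (Finset.univ : Finset (Fin n))) (n := q)
    (by simpa using hqn)
  exact ⟨⟨t, ht⟩⟩

/-- the equivalence on `q`-subsets induced by a permutation of `Fin n`. -/
def swapE (σ : Fin n ≃ Fin n) :
    {t : Finset (Fin n) // t.card = q} ≃ {t : Finset (Fin n) // t.card = q} :=
  σ.finsetCongr.subtypeEquiv fun t => by simp

@[simp] lemma swapE_coe (σ : Fin n ≃ Fin n) (I : {t : Finset (Fin n) // t.card = q}) :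
    (swapE σ I).1 = I.1.map σ.toEmbedding := rfl

/-- the indicator `χ_i(I)`. -/
noncomputable def chi (i : Fin n) (I : {t : Finset (Fin n) // t.card = q}) : ℝ :=
  if i ∈ I.1 then 1 else 0

lemma map_swap_eq {Λ : Finset (Fin n)} {i j : Fin n} (hi : i ∈ Λ) (hj : j ∈ Λ) :
    Λ.map (Equiv.swap i j).toEmbedding = Λ := by
  ext x
  rw [Finset.mem_map_equiv, Equiv.symm_swap, Equiv.swap_apply_def]
  split_ifs with h1 h2
  · subst h1; tauto
  · subst h2; tauto
  · rfl

lemma card_inter_swap {Λ : Finset (Fin n)} {i j : Fin n} (hi : i ∈ Λ) (hj : j ∈ Λ)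
    (I : {t : Finset (Fin n) // t.card = q}) :
    (((swapE (Equiv.swap i j) I).1) ∩ Λ).card = (I.1 ∩ Λ).card := by
  rw [swapE_coe]
  conv_lhs => rw [← map_swap_eq hi hj]
  rw [← Finset.map_inter, Finset.card_map]

lemma chi_swap {i j : Fin n} (I : {t : Finset (Fin n) // t.card = q}) :
    chi j (swapE (Equiv.swap i j) I) = chi i I := by
  simp only [chi, swapE_coe, Finset.mem_map_equiv, Equiv.symm_swap, Equiv.swap_apply_right]

lemma sum_chi_eq (i j : Fin n) :
    ∑ I : {t : Finset (Fin n) // t.card = q}, chi i I =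
      ∑ I : {t : Finset (Fin n) // t.card = q}, chi j I :=
  Fintype.sum_equiv (swapE (Equiv.swap i j)) _ _ fun I => (chi_swap I).symm

lemma sum_chi_inv_eq {Λ : Finset (Fin n)} {i j : Fin n} (hi : i ∈ Λ) (hj : j ∈ Λ) :
    ∑ I : {t : Finset (Fin n) // t.card = q}, chi i I * ((I.1 ∩ Λ).card : ℝ)⁻¹ =
      ∑ I : {t : Finset (Fin n) // t.card = q}, chi j I * ((I.1 ∩ Λ).card : ℝ)⁻¹ :=
  Fintype.sum_equiv (swapE (Equiv.swap i j)) _ _ fun I => by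
    rw [chi_swap, card_inter_swap hi hj]

lemma sum_chi_over (Λ : Finset (Fin n)) (I : {t : Finset (Fin n) // t.card = q}) :
    ∑ j ∈ Λ, chi j I = ((I.1 ∩ Λ).card : ℝ) := by
  classical
  simp only [chi]
  rw [Finset.sum_ite_mem, Finset.sum_const, Finset.inter_comm]
  simp

lemma sum_rhoW (Λ : Finset (Fin n)) (I : {t : Finset (Fin n) // t.card = q}) :
    ∑ j ∈ Λ, rhoW n q j I = ((I.1 ∩ Λ).card : ℝ) * ((n : ℝ) / q) := by
  classical
  simp only [rhoW]
  rw [Finset.sum_ite_mem, Finset.sum_const, Finset.inter_comm]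
  simp [mul_comm]

lemma one_le_card_inter {Λ : Finset (Fin n)} {m : ℕ} (hm : Λ.card = m) (hqm : n < q + m)
    (I : {t : Finset (Fin n) // t.card = q}) : 1 ≤ (I.1 ∩ Λ).card := by
  have h1 := Finset.card_union_add_card_inter I.1 Λ
  have h2 : (I.1 ∪ Λ).card ≤ n := by
    simpa using Finset.card_le_univ (I.1 ∪ Λ)
  rw [I.2, hm] at h1
  omega

end RhoAux

open RhoAux in
/-- **`R_{2,W}` for Random hold-out(q) weights**: for any cell `Λ` of cardinality `m ≥ 1`
with `q + m > n` (so that `I ∩ Λ ≠ ∅` a.s.), any `i ∈ Λ` and `W̄ = m⁻¹ Σ_{j∈Λ} W_j`, one has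
`E[(W_i − W̄)²/W̄ | W̄ > 0] = n/q − 1`. -/
theorem rho_R2 (n q : ℕ) (hq1 : 1 ≤ q) (hqn : q ≤ n)
    (Λ : Finset (Fin n)) (m : ℕ) (hm : Λ.card = m) (hm1 : 1 ≤ m) (hqm : n < q + m)
    (i : Fin n) (hi : i ∈ Λ) :
    ∫ I, (rhoW n q i I - (∑ j ∈ Λ, rhoW n q j I) / m) ^ 2 /
        ((∑ j ∈ Λ, rhoW n q j I) / m)
      ∂((unifM {t : Finset (Fin n) // t.card = q})[|
        {I | 0 < (∑ j ∈ Λ, rhoW n q j I) / m}]) =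
      (n : ℝ) / q - 1 := by
  classical
  set N := {t : Finset (Fin n) // t.card = q}
  have : Nonempty N := nonempty_NQ hqn
  have hn1 : 1 ≤ n := le_trans hq1 hqn
  have hn0 : (n : ℝ) ≠ 0 := Nat.cast_ne_zero.2 (by omega)
  have hq0 : (q : ℝ) ≠ 0 := Nat.cast_ne_zero.2 (by omega)
  have hm0 : (m : ℝ) ≠ 0 := Nat.cast_ne_zero.2 (by omega)
  set c : ℝ := (n : ℝ) / q with hc
  have hcpos : 0 < c := div_pos (by positivity) (by positivity)
  -- cardinalities of intersections are positive
  have hK : ∀ I : N, (1 : ℝ) ≤ ((I.1 ∩ Λ).card : ℝ) := fun I => by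
    exact_mod_cast one_le_card_inter hm hqm I
  have hK0 : ∀ I : N, ((I.1 ∩ Λ).card : ℝ) ≠ 0 := fun I =>
    ne_of_gt (lt_of_lt_of_le one_pos (hK I))
  -- the conditioning event is everything
  have hset : {I : N | 0 < (∑ j ∈ Λ, rhoW n q j I) / m} = Set.univ := by
    ext I
    simp only [Set.mem_setOf_eq, Set.mem_univ, iff_true]
    rw [sum_rhoW]
    have : (0:ℝ) < ((I.1 ∩ Λ).card : ℝ) := lt_of_lt_of_le one_pos (hK I)
    positivity
  have hcard0 : (Fintype.card N : ℝ) ≠ 0 := Nat.cast_ne_zero.2 Fintype.card_ne_zero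
  have hcardE : (Fintype.card N : ENNReal) ≠ 0 := Nat.cast_ne_zero.2 Fintype.card_ne_zero
  have hprob : IsProbabilityMeasure (unifM N) := by
    constructor
    rw [unifM, Measure.smul_apply, Measure.count_univ, ENat.card_eq_coe_fintype_card, ENat.toENNReal_coe, smul_eq_mul,
      ENNReal.inv_mul_cancel hcardE (ENNReal.natCast_ne_top _)]
  rw [hset, ProbabilityTheory.cond_univ]
  -- compute the integral as a finite sum
  rw [unifM, integral_smul_measure,
    integral_fintype (Integrable.of_finite),]
  simp only [Measure.count_singleton, MeasureTheory.count_real_singleton, ENNReal.toReal_one, one_smul]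
  -- pointwise value of the integrand
  have hpt : ∀ I : N,
      (rhoW n q i I - (∑ j ∈ Λ, rhoW n q j I) / m) ^ 2 /
          ((∑ j ∈ Λ, rhoW n q j I) / m) =
        c * m * (chi i I * ((I.1 ∩ Λ).card : ℝ)⁻¹) - 2 * c * chi i I +
          (c / m) * ((I.1 ∩ Λ).card : ℝ) := by
    intro I
    rw [sum_rhoW]
    set K : ℝ := ((I.1 ∩ Λ).card : ℝ)
    have hKne : K ≠ 0 := hK0 I
    rw [rhoW, chi, hc]
    split_ifs with h
    · field_simp
      ring
    · field_simp
      ring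
  -- key sums
  set B : ℝ := ∑ I : N, chi i I with hB
  set A : ℝ := ∑ I : N, chi i I * ((I.1 ∩ Λ).card : ℝ)⁻¹ with hA
  have hmA : (m : ℝ) * A = (Fintype.card N : ℝ) := by
    have h1 : (m : ℝ) * A = ∑ j ∈ Λ, ∑ I : N, chi j I * ((I.1 ∩ Λ).card : ℝ)⁻¹ := by
      rw [Finset.sum_congr rfl fun j hj => (sum_chi_inv_eq hj hi :)]
      rw [Finset.sum_const, hm, nsmul_eq_mul]
    rw [h1, Finset.sum_comm]
    rw [Finset.sum_congr rfl fun I _ => by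
      rw [← Finset.sum_mul, sum_chi_over, mul_inv_cancel₀ (hK0 I)]]
    simp [Finset.card_univ]
  have hnB : (n : ℝ) * B = (q : ℝ) * (Fintype.card N : ℝ) := by
    have h1 : (n : ℝ) * B = ∑ j : Fin n, ∑ I : N, chi j I := by
      rw [Finset.sum_congr rfl fun j _ => (sum_chi_eq j i :)]
      simp [Finset.card_univ, mul_comm]
      exact Or.inl hB
    rw [h1, Finset.sum_comm]
    have h2 : ∀ I : N, ∑ j : Fin n, chi j I = (q : ℝ) := by
      intro I
      have := sum_chi_over (Finset.univ : Finset (Fin n)) I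
      simpa [I.2] using this
    rw [Finset.sum_congr rfl fun I _ => h2 I]
    simp [Finset.card_univ, mul_comm]
  have hCsum : ∑ I : N, ((I.1 ∩ Λ).card : ℝ) = (m : ℝ) * B := by
    rw [Finset.sum_congr rfl fun I _ => (sum_chi_over Λ I).symm, Finset.sum_comm]
    rw [Finset.sum_congr rfl fun j hj => (sum_chi_eq j i :)]
    rw [Finset.sum_const, hm, nsmul_eq_mul]
  -- total sum
  have htot : ∑ I : N, (rhoW n q i I - (∑ j ∈ Λ, rhoW n q j I) / m) ^ 2 /
      ((∑ j ∈ Λ, rhoW n q j I) / m) = (Fintype.card N : ℝ) * (c - 1) := by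
    rw [Finset.sum_congr rfl fun I _ => hpt I]
    rw [Finset.sum_add_distrib, Finset.sum_sub_distrib, ← Finset.mul_sum, ← Finset.mul_sum,
      ← Finset.mul_sum, ← hA, ← hB, hCsum]
    have hcB : c * B = (Fintype.card N : ℝ) := by
      rw [hc]
      field_simp
      nlinarith [hnB]
    have hA' : A = (Fintype.card N : ℝ) / m := by
      field_simp
      nlinarith [hmA]
    rw [hA']
    have h1 : c * (m : ℝ) * ((Fintype.card N : ℝ) / m) = c * (Fintype.card N : ℝ) := by
      field_simp
    have h2 : c / (m : ℝ) * ((m : ℝ) * B) = c * B := by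
      field_simp
    rw [h1, h2]
    linear_combination -hcB
  rw [htot]
  rw [ENNReal.toReal_inv, smul_eq_mul, ENNReal.toReal_natCast]
  rw [inv_mul_cancel_left₀ hcard0]
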